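/- Let t > 0 and let X, Y, Z be independent random variables on a probability space, each Poisson distributed with parameter t. Then for every h ∈ ℕ, P(X + max(Y, Z) = h) = 2 tʰ e^{−3t} Σ_{k=0}^{h} [ (1/(k!(h−k)!)) Σ_{j=0}^{k−1} tʲ/j! ] + tʰ e^{−3t} Σ_{k=0}^{h} tᵏ/(k!² (h−k)!). -/

import Mathlib

open MeasureTheory ProbabilityTheory Real Finset

private lemma maxsum_aux (p : ℕ → ℝ) (h m : ℕ) (hm : m ≤ h) :
    ∑ b ∈ range (h+1), ∑ c ∈ range (h+1), (if max b c = m then p b * p c else 0)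
      = 2 * p m * (∑ j ∈ range m, p j) + p m * p m := by
  have key : ∀ b ∈ range (h+1),
      (∑ c ∈ range (h+1), (if max b c = m then p b * p c else 0))
        = (if b = m then p m * ∑ j ∈ range (m+1), p j else 0) + (if b ∈ range m then p b * p m else 0) := by
    intro b hb
    rw [mem_range] at hb
    rcases lt_trichotomy b m with hbm | rfl | hbm
    · rw [if_neg (by omega), if_pos (mem_range.mpr hbm), zero_add]
      rw [Finset.sum_eq_single m]
      · rw [if_pos (by omega)]
      · intro c hc hcm
        rw [if_neg (by omega)]
      · intro hc; exact absurd (mem_range.mpr (by omega)) hc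
    · rw [if_pos rfl, if_neg (by simp), add_zero]
      have : ∀ c ∈ range (h+1), (if max b c = b then p b * p c else 0)
          = if c ∈ range (b+1) then p b * p c else 0 := by
        intro c hc; congr 1; simp [mem_range]
      rw [Finset.sum_congr rfl this, Finset.sum_ite_mem,
        Finset.inter_eq_right.mpr (by intro x hx; rw [mem_range] at *; omega), Finset.mul_sum]
    · rw [if_neg (by omega), if_neg (by simp; omega)]
      simp only [add_zero]
      apply Finset.sum_eq_zero
      intro c hc; rw [if_neg (by omega)]
  rw [Finset.sum_congr rfl key, Finset.sum_add_distrib,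
    Finset.sum_ite_eq' (range (h+1)) m, if_pos (mem_range.mpr (by omega)),
    Finset.sum_ite_mem, Finset.inter_eq_right.mpr (by intro x hx; rw [mem_range] at *; omega),
    ← Finset.sum_mul, Finset.sum_range_succ]
  ring

private lemma alg_aux (t : ℝ) (h : ℕ) :
    ∑ a ∈ range (h+1), ∑ b ∈ range (h+1), ∑ c ∈ range (h+1),
      (if a + max b c = h then
        (exp (-t) * t ^ a / a.factorial) * (exp (-t) * t ^ b / b.factorial)
          * (exp (-t) * t ^ c / c.factorial) else 0)
      = 2 * t ^ h * exp (-(3 * t)) *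
            ∑ k ∈ range (h + 1),
              (1 / ((Nat.factorial k) * (Nat.factorial (h - k)))) *
                ∑ j ∈ range k, t ^ j / (Nat.factorial j) +
          t ^ h * exp (-(3 * t)) *
            ∑ k ∈ range (h + 1),
              t ^ k / ((Nat.factorial k) ^ 2 * (Nat.factorial (h - k))) := by
  set p : ℕ → ℝ := fun k => exp (-t) * t ^ k / k.factorial with hp
  have step1 : ∀ a ∈ range (h+1),
      (∑ b ∈ range (h+1), ∑ c ∈ range (h+1),
        (if a + max b c = h then p a * p b * p c else 0))
      = p a * (2 * p (h-a) * (∑ j ∈ range (h-a), p j) + p (h-a) * p (h-a)) := by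
    intro a ha
    rw [mem_range] at ha
    have : ∀ b ∈ range (h+1), ∀ c ∈ range (h+1),
        (if a + max b c = h then p a * p b * p c else 0)
          = p a * (if max b c = h - a then p b * p c else 0) := by
      intro b _ c _
      rcases eq_or_ne (max b c) (h - a) with hbc | hbc
      · rw [if_pos (by omega), if_pos hbc]; ring
      · rw [if_neg (by omega), if_neg hbc, mul_zero]
    calc ∑ b ∈ range (h+1), ∑ c ∈ range (h+1), (if a + max b c = h then p a * p b * p c else 0)
        = ∑ b ∈ range (h+1), ∑ c ∈ range (h+1), p a * (if max b c = h - a then p b * p c else 0) := by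
          refine Finset.sum_congr rfl fun b hb => Finset.sum_congr rfl fun c hc => this b hb c hc
      _ = p a * (∑ b ∈ range (h+1), ∑ c ∈ range (h+1), (if max b c = h - a then p b * p c else 0)) := by
          rw [Finset.mul_sum]; exact Finset.sum_congr rfl fun b _ => (Finset.mul_sum _ _ _).symm
      _ = _ := by rw [maxsum_aux p h (h-a) (by omega)]
  rw [Finset.sum_congr rfl step1]
  rw [← Finset.sum_range_reflect (fun k => (1 / ((Nat.factorial k : ℝ) * (Nat.factorial (h - k)))) *
        ∑ j ∈ range k, t ^ j / (Nat.factorial j)) (h+1),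
      ← Finset.sum_range_reflect (fun k => t ^ k / ((Nat.factorial k : ℝ) ^ 2 * (Nat.factorial (h - k)))) (h+1)]
  rw [Finset.mul_sum, Finset.mul_sum, ← Finset.sum_add_distrib]
  refine Finset.sum_congr rfl fun a ha => ?_
  rw [mem_range] at ha
  have e1 : h + 1 - 1 - a = h - a := by omega
  have e2 : h - (h - a) = a := by omega
  rw [e1, e2]
  have hsq : ∑ j ∈ range (h-a), p j = exp (-t) * ∑ j ∈ range (h-a), t ^ j / (Nat.factorial j) := by
    rw [Finset.mul_sum]; exact Finset.sum_congr rfl fun j _ => by rw [hp]; ring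
  rw [hsq, hp]
  simp only
  have hfa : (a.factorial : ℝ) ≠ 0 := Nat.cast_ne_zero.mpr a.factorial_ne_zero
  have hfb : ((h-a).factorial : ℝ) ≠ 0 := Nat.cast_ne_zero.mpr (h-a).factorial_ne_zero
  have hth : t ^ a * t ^ (h-a) = t ^ h := by rw [← pow_add]; congr 1; omega
  have hexp : exp (-(3*t)) = exp (-t) * (exp (-t) * exp (-t)) := by
    rw [← Real.exp_add, ← Real.exp_add]; ring_nf
  rw [hexp, ← hth]
  field_simp

/-- For independent Poisson(t) variables `X`, `Y`, `Z`:
`P(X + max(Y,Z) = h) = 2 tʰ e^{-3t} Σ_{k≤h} (1/(k!(h-k)!)) Σ_{j<k} tʲ/j!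
  + tʰ e^{-3t} Σ_{k≤h} tᵏ/(k!²(h-k)!)`. -/
theorem prob_height_poisson_eq {Ω : Type*} [MeasurableSpace Ω] (μ : Measure Ω)
    [IsProbabilityMeasure μ] (t : ℝ) (ht : 0 < t) (X Y Z : Ω → ℕ)
    (hIndep : iIndepFun (m := fun _ : Fin 3 => (inferInstance : MeasurableSpace ℕ)) ![X, Y, Z] μ)
    (hX : ∀ k : ℕ, μ {ω | X ω = k} = ENNReal.ofReal (exp (-t) * t ^ k / (Nat.factorial k)))
    (hY : ∀ k : ℕ, μ {ω | Y ω = k} = ENNReal.ofReal (exp (-t) * t ^ k / (Nat.factorial k)))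
    (hZ : ∀ k : ℕ, μ {ω | Z ω = k} = ENNReal.ofReal (exp (-t) * t ^ k / (Nat.factorial k)))
    (h : ℕ) :
    μ {ω | X ω + max (Y ω) (Z ω) = h} =
      ENNReal.ofReal
        (2 * t ^ h * exp (-(3 * t)) *
            ∑ k ∈ range (h + 1),
              (1 / ((Nat.factorial k) * (Nat.factorial (h - k)))) *
                ∑ j ∈ range k, t ^ j / (Nat.factorial j) +
          t ^ h * exp (-(3 * t)) *
            ∑ k ∈ range (h + 1),
              t ^ k / ((Nat.factorial k) ^ 2 * (Nat.factorial (h - k)))) := by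
  classical
  set p : ℕ → ℝ := fun k => exp (-t) * t ^ k / k.factorial with hp
  have hnn : ∀ k : ℕ, 0 ≤ p k := fun k => by rw [hp]; positivity
  set P : ℕ → ENNReal := fun k => ENNReal.ofReal (p k) with hPdef
  set q : ℕ × ℕ × ℕ → ℝ := fun x => p x.1 * p x.2.1 * p x.2.2 with hq
  set Q : ℕ × ℕ × ℕ → ENNReal := fun x => P x.1 * P x.2.1 * P x.2.2 with hQ
  have hQq : ∀ x, Q x = ENNReal.ofReal (q x) := by
    intro x
    rw [hQ, hq]
    simp only
    rw [ENNReal.ofReal_mul (mul_nonneg (hnn _) (hnn _)), ENNReal.ofReal_mul (hnn _)]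
  -- fiber probabilities
  have hfib : ∀ x : ℕ × ℕ × ℕ,
      μ {ω | X ω = x.1 ∧ Y ω = x.2.1 ∧ Z ω = x.2.2} = Q x := by
    rintro ⟨a, b, c⟩
    have key := (iIndepFun_iff_measure_inter_preimage_eq_mul.mp hIndep) Finset.univ
      (sets := ![{a}, {b}, {c}]) (fun i _ => trivial)
    have hset : (⋂ i ∈ Finset.univ, ![X, Y, Z] i ⁻¹' ![{a}, {b}, {c}] i)
        = {ω | X ω = a ∧ Y ω = b ∧ Z ω = c} := by
      ext ω
      simp [Fin.forall_fin_succ]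
    rw [hset] at key
    rw [key, Fin.prod_univ_three]
    show μ (X ⁻¹' {a}) * μ (Y ⁻¹' {b}) * μ (Z ⁻¹' {c}) = _
    have hXa : X ⁻¹' {a} = {ω | X ω = a} := rfl
    have hYb : Y ⁻¹' {b} = {ω | Y ω = b} := rfl
    have hZc : Z ⁻¹' {c} = {ω | Z ω = c} := rfl
    rw [hXa, hYb, hZc, hX a, hY b, hZ c]
  -- total mass of P
  have htotP : ∑' k : ℕ, P k = 1 := by
    have hsum : Summable p := by
      rw [hp]; simp_rw [mul_div_assoc]
      exact (Real.summable_pow_div_factorial t).mul_left _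
    rw [hPdef]
    simp only
    rw [← ENNReal.ofReal_tsum_of_nonneg hnn hsum]
    have : ∑' k : ℕ, p k = 1 := by
      rw [hp]
      simp_rw [mul_div_assoc]
      rw [tsum_mul_left]
      have he : ∑' n : ℕ, t ^ n / n.factorial = Real.exp t := by
        rw [Real.exp_eq_exp_ℝ, NormedSpace.exp_eq_tsum_div]
      rw [he, ← Real.exp_add]
      simp
    rw [this, ENNReal.ofReal_one]
  -- total mass of Q
  have hPP : ∑' yz : ℕ × ℕ, P yz.1 * P yz.2 = 1 := by
    calc ∑' yz : ℕ × ℕ, P yz.1 * P yz.2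
        = ∑' (a : ℕ) (b : ℕ), P a * P b := by rw [ENNReal.tsum_prod']
      _ = ∑' (a : ℕ), P a * ∑' (b : ℕ), P b :=
          tsum_congr fun a => ENNReal.tsum_mul_left
      _ = 1 := by simp [htotP]
  have htotQ : ∑' x : ℕ × ℕ × ℕ, Q x = 1 := by
    calc ∑' x : ℕ × ℕ × ℕ, Q x
        = ∑' (a : ℕ) (yz : ℕ × ℕ), P a * (P yz.1 * P yz.2) := by
          rw [ENNReal.tsum_prod']
          exact tsum_congr fun a => tsum_congr fun yz => mul_assoc _ _ _

      _ = ∑' (a : ℕ), P a * ∑' (yz : ℕ × ℕ), P yz.1 * P yz.2 :=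
          tsum_congr fun a => ENNReal.tsum_mul_left
      _ = 1 := by simp [hPP, htotP]
  -- upper bound for any set D
  have upper : ∀ D : Set (ℕ × ℕ × ℕ),
      μ {ω | (X ω, Y ω, Z ω) ∈ D} ≤ ∑' x : D, Q x := by
    intro D
    have hE : {ω | (X ω, Y ω, Z ω) ∈ D}
        = ⋃ x : D, {ω | X ω = (x : ℕ × ℕ × ℕ).1 ∧ Y ω = (x : ℕ × ℕ × ℕ).2.1
            ∧ Z ω = (x : ℕ × ℕ × ℕ).2.2} := by
      ext ω
      simp only [Set.mem_setOf_eq, Set.mem_iUnion]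
      constructor
      · intro hm; exact ⟨⟨_, hm⟩, rfl, rfl, rfl⟩
      · rintro ⟨⟨x, hx⟩, h1, h2, h3⟩
        have : (X ω, Y ω, Z ω) = x := by
          ext <;> simp_all
        rw [this]; exact hx
    rw [hE]
    refine le_trans (measure_iUnion_le _) ?_
    exact le_of_eq (tsum_congr fun x => hfib x)
  -- exact value for any set D
  have eqD : ∀ D : Set (ℕ × ℕ × ℕ),
      μ {ω | (X ω, Y ω, Z ω) ∈ D} = ∑' x : D, Q x := by
    intro D
    have h1 := upper D
    have h2 := upper Dᶜ
    have hsplit : (∑' x : D, Q x) + (∑' x : ↥Dᶜ, Q x) = 1 := by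
      rw [Summable.tsum_add_tsum_compl (f := Q) ENNReal.summable ENNReal.summable, htotQ]
    have hunion : {ω | (X ω, Y ω, Z ω) ∈ D} ∪ {ω | (X ω, Y ω, Z ω) ∈ Dᶜ} = Set.univ := by
      ext ω; simp [em]
    have hge : (1 : ENNReal) ≤ μ {ω | (X ω, Y ω, Z ω) ∈ D} + μ {ω | (X ω, Y ω, Z ω) ∈ Dᶜ} := by
      rw [← measure_univ (μ := μ), ← hunion]
      exact measure_union_le _ _
    by_contra hne
    have hlt : μ {ω | (X ω, Y ω, Z ω) ∈ D} < ∑' x : D, Q x := lt_of_le_of_ne h1 hne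
    have : μ {ω | (X ω, Y ω, Z ω) ∈ D} + μ {ω | (X ω, Y ω, Z ω) ∈ Dᶜ}
        < (∑' x : D, Q x) + (∑' x : ↥Dᶜ, Q x) :=
      ENNReal.add_lt_add_of_lt_of_le (measure_ne_top μ _) hlt h2
    rw [hsplit] at this
    exact absurd hge (not_le.mpr this)
  -- the event as a finite set condition
  set T : Finset (ℕ × ℕ × ℕ) :=
    ((range (h+1)) ×ˢ ((range (h+1)) ×ˢ (range (h+1)))).filter
      (fun x => x.1 + max x.2.1 x.2.2 = h) with hT
  have hEvent : {ω | X ω + max (Y ω) (Z ω) = h} = {ω | (X ω, Y ω, Z ω) ∈ (↑T : Set (ℕ × ℕ × ℕ))} := by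
    ext ω
    simp only [Set.mem_setOf_eq, hT, Finset.coe_filter, Finset.mem_product, Finset.mem_range]
    omega
  rw [hEvent, eqD (↑T : Set (ℕ × ℕ × ℕ)), Finset.tsum_subtype' T Q]
  have hsum1 : ∑ x ∈ T, Q x = ENNReal.ofReal (∑ x ∈ T, q x) := by
    rw [ENNReal.ofReal_sum_of_nonneg (fun x _ => mul_nonneg (mul_nonneg (hnn _) (hnn _)) (hnn _))]
    exact Finset.sum_congr rfl fun x _ => hQq x
  rw [hsum1]
  congr 1
  rw [hT, Finset.sum_filter, Finset.sum_product]
  simp_rw [Finset.sum_product]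
  exact alg_aux t h
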